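/- Let Q = {x_i^{q^{n'}} − L(g_W(x_i)) : 0 ≤ i ≤ m−1} ⊆ R = k[x_0,…,x_{m−1}]. The k-algebra homomorphism R → S/⟨Q̄⟩ determined by x_i ↦ x_{i0} (mod ⟨Q̄⟩) induces a k-algebra isomorphism R/⟨Q⟩ ≅ S/⟨Q̄⟩ under which, for 0 ≤ j ≤ n'−1, the class of x_i^{q^j} corresponds to the class of x_{ij}. -/

import Mathlib

open MvPolynomial

noncomputable section

def Vspace {σ K : Type*} [Field K] (G : Set (MvPolynomial σ K)) (i : ℕ) :
    Submodule K (MvPolynomial σ K) :=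
  sInf {W : Submodule K (MvPolynomial σ K) |
    (∀ f ∈ W, MvPolynomial.totalDegree f ≤ i) ∧
    (∀ g ∈ G, MvPolynomial.totalDegree g ≤ i → g ∈ W) ∧
    ∀ g ∈ W, ∀ h : MvPolynomial σ K,
      MvPolynomial.totalDegree (h * g) ≤ i → h * g ∈ W}

def lastFallDegree {σ K : Type*} [Field K] (G : Set (MvPolynomial σ K)) : ℕ :=
  sSup {d : ℕ | 0 < d ∧
    Vspace G d ⊓ MvPolynomial.restrictTotalDegree σ K (d - 1) ≠ Vspace G (d - 1)}

/-- `ℓ(h(x_i))` : the linear form `∑_j h_j x_{ij}` in `S = k[x_{ij}]`,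
for a univariate polynomial `h` of degree `< n'`. -/
def ellAt {k : Type*} [Field k] (m n' : ℕ) (i : Fin m) (h : Polynomial k) :
    MvPolynomial (Fin m × Fin n') k :=
  ∑ j : Fin n', C (h.coeff (j : ℕ)) * X (i, j)

/-- `ℓ(f)` for `f = ∑_i f_i(x_i)` with `deg f_i < n'`. -/
def ellSum {k : Type*} [Field k] (m n' : ℕ) (φ : Fin m → Polynomial k) :
    MvPolynomial (Fin m × Fin n') k :=
  ∑ i : Fin m, ellAt m n' i (φ i)

/-- `Q̄_r` : the set of relations `x_{ij}^q - x_{i,j+1}` (for `j < n'-1`) and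
`x_{i,n'-1}^q - ℓ(g_W(x_i))`, restricted to indices `i ≥ r`. -/
def QbarFrom {k : Type*} [Field k] (m n' q r : ℕ) (gW : Polynomial k) :
    Set (MvPolynomial (Fin m × Fin n') k) :=
  {P | ∃ (i : Fin m) (j : Fin n') (hj : (j : ℕ) + 1 < n'), r ≤ (i : ℕ) ∧
        P = X (i, j) ^ q - X (i, ⟨(j : ℕ) + 1, hj⟩)} ∪
  {P | ∃ (i : Fin m) (j : Fin n'), r ≤ (i : ℕ) ∧ (j : ℕ) + 1 = n' ∧
        P = X (i, j) ^ q - ellAt m n' i gW}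

/-- `S_{1r}` : the space of `k`-linear forms in the variables `x_{ij}` with `i ≥ r`. -/
def S1r {k : Type*} [Field k] (m n' : ℕ) (r : ℕ) :
    Submodule k (MvPolynomial (Fin m × Fin n') k) :=
  Submodule.span k {P | ∃ p : Fin m × Fin n', r ≤ (p.1 : ℕ) ∧ P = X p}

/-- `L(h)` for `h = ∑_i h_i(x_i)` with `deg h_i < n` : the `k'`-linearized polynomial
`∑_i ∑_j h_{ij} x_i^{q^j}`. -/
def Lmap {k : Type*} [Field k] (m n q : ℕ) (h : Fin m → Polynomial k) :
    MvPolynomial (Fin m) k :=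
  ∑ i : Fin m, ∑ j : Fin n, C ((h i).coeff (j : ℕ)) * X i ^ q ^ (j : ℕ)

/-- `F` is reducible for `W` (where `W` corresponds to `f_W`): for each `i < m-1`,
either `V_{Ḡ,q} ∩ S_{1i} = V_{Ḡ,q} ∩ S_{1,i+1}`, or some `k'`-linearized `L(f_i)`,
`f_i = ∑_{j≥i} g_{ij}` with `deg g_{ij} < n'`, has `ℓ(f_i) ∈ V_{Ḡ,q} ∩ S_{1i}` and
`gcd(g_{ii}, f_W) = 1`. -/
def ReducibleFor {k' k : Type*} [Field k'] [Field k] [Algebra k' k]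
    (q m n' : ℕ) (fW : Polynomial k')
    (Gbar : Set (MvPolynomial (Fin m × Fin n') k)) : Prop :=
  ∀ i : Fin m, (i : ℕ) + 1 < m →
    (Vspace Gbar q ⊓ S1r m n' (i : ℕ) = Vspace Gbar q ⊓ S1r m n' ((i : ℕ) + 1)) ∨
    ∃ φ : Fin m → Polynomial k,
      (∀ j, (φ j).natDegree < n') ∧
      (∀ j : Fin m, (j : ℕ) < (i : ℕ) → φ j = 0) ∧
      ellSum m n' φ ∈ Vspace Gbar q ⊓ S1r m n' (i : ℕ) ∧
      IsCoprime (φ i) (fW.map (algebraMap k' k))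

namespace QQbarAux

open MvPolynomial

variable {k : Type} [Field k]

lemma mk_X_eq_pow (m n' q : ℕ) (gW' : Polynomial k) (i : Fin m) (h0 : 0 < n') :
    ∀ (j : ℕ) (hj : j < n'),
      Ideal.Quotient.mk (Ideal.span (QbarFrom m n' q 0 gW')) (X (i, ⟨j, hj⟩)) =
        Ideal.Quotient.mk (Ideal.span (QbarFrom m n' q 0 gW')) (X (i, ⟨0, h0⟩)) ^ q ^ j
  | 0, hj => by simp
  | (j+1), hj => by
    have h1 : (X (i, (⟨j, Nat.lt_of_succ_lt hj⟩ : Fin n')) ^ q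
        - X (i, (⟨j+1, hj⟩ : Fin n')) : MvPolynomial (Fin m × Fin n') k)
        ∈ Ideal.span (QbarFrom m n' q 0 gW') :=
      Ideal.subset_span (Or.inl ⟨i, ⟨j, Nat.lt_of_succ_lt hj⟩, hj, Nat.zero_le _, rfl⟩)
    have h2 : Ideal.Quotient.mk (Ideal.span (QbarFrom m n' q 0 gW'))
          (X (i, (⟨j+1, hj⟩ : Fin n')))
        = Ideal.Quotient.mk _ (X (i, (⟨j, Nat.lt_of_succ_lt hj⟩ : Fin n')) ^ q) :=
      (Ideal.Quotient.eq.mpr h1).symm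
    rw [h2, map_pow, mk_X_eq_pow m n' q gW' i h0 j (Nat.lt_of_succ_lt hj),
      ← pow_mul, ← pow_succ]

set_option synthInstance.maxHeartbeats 1000000 in
lemma mk_X_pow_top (m n' q : ℕ) (gW' : Polynomial k) (i : Fin m) (h0 : 0 < n') :
    Ideal.Quotient.mk (Ideal.span (QbarFrom m n' q 0 gW')) (X (i, ⟨0, h0⟩)) ^ q ^ n' =
      ∑ j : Fin n', Ideal.Quotient.mk (Ideal.span (QbarFrom m n' q 0 gW'))
        (C (gW'.coeff (j : ℕ)) * X (i, j)) := by
  obtain ⟨n'', rfl⟩ : ∃ n'', n' = n'' + 1 := ⟨n' - 1, (Nat.succ_pred_eq_of_pos h0).symm⟩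
  have h1 : (X (i, (⟨n'', Nat.lt_succ_self _⟩ : Fin (n''+1))) ^ q
      - ellAt m (n''+1) i gW' : MvPolynomial (Fin m × Fin (n''+1)) k)
      ∈ Ideal.span (QbarFrom m (n''+1) q 0 gW') :=
    Ideal.subset_span (Or.inr ⟨i, ⟨n'', Nat.lt_succ_self _⟩, Nat.zero_le _, rfl, rfl⟩)
  have h2 : Ideal.Quotient.mk (Ideal.span (QbarFrom m (n''+1) q 0 gW'))
        (X (i, (⟨n'', Nat.lt_succ_self _⟩ : Fin (n''+1))) ^ q)
      = Ideal.Quotient.mk _ (ellAt m (n''+1) i gW') :=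
    Ideal.Quotient.eq.mpr h1
  rw [pow_succ, pow_mul, ← mk_X_eq_pow m (n''+1) q gW' i h0 n'' (Nat.lt_succ_self _),
    ← map_pow, h2, ellAt, map_sum]

end QQbarAux


set_option maxHeartbeats 2000000 in
set_option synthInstance.maxHeartbeats 1000000 in
/-- With `Q = {x_i^{q^{n'}} - L(g_W(x_i))} ⊆ R = k[x_0,…,x_{m-1}]`, the `k`-algebra
homomorphism `R → S/⟨Q̄⟩` sending `x_i ↦ x_{i0}` induces a `k`-algebra isomorphism
`R/⟨Q⟩ ≅ S/⟨Q̄⟩` under which the class of `x_i^{q^j}` corresponds to the class of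
`x_{ij}` for `0 ≤ j ≤ n'-1`. -/
theorem quotient_iso_Q_Qbar
    {k' k : Type} [Field k'] [Fintype k'] [Field k] [Algebra k' k]
    (q n m : ℕ) (hq : q = Fintype.card k') (hn : 0 < n)
    (α : Module.Basis (Fin n) k' k)
    (fW : Polynomial k') (hmonic : fW.Monic) (hdvd : fW ∣ Polynomial.X ^ n - 1)
    (n' : ℕ) (hn' : n' = fW.natDegree) (hn'pos : 0 < n')
    (gW : Polynomial k') (hgW : gW = Polynomial.X ^ n' - fW)
    (Q : Set (MvPolynomial (Fin m) k))
    (hQ : Q = Set.range fun i : Fin m =>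
      X i ^ q ^ n' -
        ∑ j : Fin n', MvPolynomial.C (algebraMap k' k (gW.coeff (j : ℕ))) *
          X i ^ q ^ (j : ℕ)) :
    ∃ e : (MvPolynomial (Fin m) k ⧸ Ideal.span Q) ≃ₐ[k]
        (MvPolynomial (Fin m × Fin n') k ⧸
          Ideal.span (QbarFrom m n' q 0 (gW.map (algebraMap k' k)))),
      (∀ f : MvPolynomial (Fin m) k,
        e (Ideal.Quotient.mk (Ideal.span Q) f) =
          Ideal.Quotient.mk _
            (aeval (fun i : Fin m => X (i, (⟨0, hn'pos⟩ : Fin n'))) f)) ∧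
      ∀ (i : Fin m) (j : Fin n'),
        e (Ideal.Quotient.mk (Ideal.span Q) (X i ^ q ^ (j : ℕ))) =
          Ideal.Quotient.mk _ (X (i, j)) := by
  classical
  subst hQ
  set gW' : Polynomial k := gW.map (algebraMap k' k) with hgW'def
  set I : Ideal (MvPolynomial (Fin m) k) := Ideal.span (Set.range fun i : Fin m =>
      X i ^ q ^ n' -
        ∑ j : Fin n', MvPolynomial.C (algebraMap k' k (gW.coeff (j : ℕ))) *
          X i ^ q ^ (j : ℕ)) with hIdef
  set J : Ideal (MvPolynomial (Fin m × Fin n') k) :=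
    Ideal.span (QbarFrom m n' q 0 gW') with hJdef
  set v : Fin m → (MvPolynomial (Fin m × Fin n') k ⧸ J) :=
    fun i => Ideal.Quotient.mk J (X (i, ⟨0, hn'pos⟩)) with hvdef
  set φ : MvPolynomial (Fin m) k →ₐ[k] (MvPolynomial (Fin m × Fin n') k ⧸ J) :=
    aeval v with hφdef
  have hcoeff : ∀ j : ℕ, gW'.coeff j = algebraMap k' k (gW.coeff j) := fun j =>
    Polynomial.coeff_map _ _
  have hφQ : ∀ a ∈ I, φ a = 0 := by
    have hle : I ≤ RingHom.ker φ.toRingHom := by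
      rw [hIdef]
      refine Ideal.span_le.mpr ?_
      rintro a ⟨i, rfl⟩
      simp only [SetLike.mem_coe, RingHom.mem_ker, AlgHom.toRingHom_eq_coe,
        RingHom.coe_coe, hφdef, map_sub, map_pow, map_sum, map_mul, aeval_X, aeval_C]
      have h1 : ∀ j : Fin n', (v i) ^ q ^ (j : ℕ) =
          Ideal.Quotient.mk J (X (i, j)) := fun j => by
        rw [hvdef, ← QQbarAux.mk_X_eq_pow m n' q gW' i hn'pos (j : ℕ) j.2, Fin.eta]
      have h2 : (v i) ^ q ^ n' = ∑ j : Fin n',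
          Ideal.Quotient.mk J (C (gW'.coeff (j : ℕ)) * X (i, j)) :=
        QQbarAux.mk_X_pow_top m n' q gW' i hn'pos
      rw [h2, sub_eq_zero]
      refine Finset.sum_congr rfl fun j _ => ?_
      rw [h1 j, map_mul, ← hcoeff, ← MvPolynomial.algebraMap_eq,
        Ideal.Quotient.mk_algebraMap]
    exact fun a ha => hle ha
  set w : Fin m × Fin n' → (MvPolynomial (Fin m) k ⧸ I) :=
    fun p => Ideal.Quotient.mk I (X p.1 ^ q ^ (p.2 : ℕ)) with hwdef
  set ψ : MvPolynomial (Fin m × Fin n') k →ₐ[k] (MvPolynomial (Fin m) k ⧸ I) :=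
    aeval w with hψdef
  have hψQ : ∀ a ∈ J, ψ a = 0 := by
    have hle : J ≤ RingHom.ker ψ.toRingHom := by
      rw [hJdef]
      refine Ideal.span_le.mpr ?_
      rintro a (⟨i, j, hj, -, rfl⟩ | ⟨i, j, -, hjn, rfl⟩)
      · simp only [SetLike.mem_coe, RingHom.mem_ker, AlgHom.toRingHom_eq_coe,
          RingHom.coe_coe, hψdef, map_sub, map_pow, aeval_X, hwdef, Fin.val_mk]
        rw [← pow_mul, ← pow_succ, sub_self]
      · simp only [SetLike.mem_coe, RingHom.mem_ker, AlgHom.toRingHom_eq_coe,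
          RingHom.coe_coe, hψdef, ellAt, map_sub, map_pow, map_sum, map_mul,
          aeval_X, aeval_C, hwdef]
        have h3 : ∀ j' : Fin n',
            algebraMap k (MvPolynomial (Fin m) k ⧸ I) (gW'.coeff (j' : ℕ)) *
              Ideal.Quotient.mk I (X i) ^ q ^ (j' : ℕ) =
            Ideal.Quotient.mk I (C (algebraMap k' k (gW.coeff (j' : ℕ))) *
              X i ^ q ^ (j' : ℕ)) := fun j' => by
          rw [map_mul, map_pow, ← MvPolynomial.algebraMap_eq,
            Ideal.Quotient.mk_algebraMap, hcoeff]
        rw [Finset.sum_congr rfl fun j' _ => h3 j', ← pow_mul, ← pow_succ, hjn,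
          ← map_pow, ← map_sum, ← map_sub]
        have h4 : (X i ^ q ^ n' - ∑ j' : Fin n',
            C (algebraMap k' k (gW.coeff (j' : ℕ))) * X i ^ q ^ (j' : ℕ) :
              MvPolynomial (Fin m) k) ∈ I := by
          rw [hIdef]; exact Ideal.subset_span ⟨i, rfl⟩
        exact Ideal.Quotient.eq_zero_iff_mem.mpr h4
    exact fun a ha => hle ha
  set Φ : (MvPolynomial (Fin m) k ⧸ I) →ₐ[k] (MvPolynomial (Fin m × Fin n') k ⧸ J) :=
    Ideal.Quotient.liftₐ I φ hφQ with hΦdef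
  set Ψ : (MvPolynomial (Fin m × Fin n') k ⧸ J) →ₐ[k] (MvPolynomial (Fin m) k ⧸ I) :=
    Ideal.Quotient.liftₐ J ψ hψQ with hΨdef
  have hΦmk : ∀ f, Φ (Ideal.Quotient.mk I f) = φ f := fun f => by
    rw [hΦdef, Ideal.Quotient.liftₐ_apply]; rfl
  have hΨmk : ∀ f, Ψ (Ideal.Quotient.mk J f) = ψ f := fun f => by
    rw [hΨdef, Ideal.Quotient.liftₐ_apply]; rfl
  have hkey : ∀ (i : Fin m) (j : Fin n'),
      Φ (Ideal.Quotient.mk I (X i ^ q ^ (j : ℕ))) = Ideal.Quotient.mk J (X (i, j)) := by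
    intro i j
    rw [hΦmk, hφdef, map_pow, aeval_X, hvdef,
      ← QQbarAux.mk_X_eq_pow m n' q gW' i hn'pos (j : ℕ) j.2, Fin.eta]
  have h1 : Ψ.comp Φ = AlgHom.id k _ := by
    have hc : (Ψ.comp Φ).comp (Ideal.Quotient.mkₐ k I) =
        (AlgHom.id k _).comp (Ideal.Quotient.mkₐ k I) := by
      apply MvPolynomial.algHom_ext
      intro i
      simp only [AlgHom.comp_apply, Ideal.Quotient.mkₐ_eq_mk, AlgHom.id_apply]
      have h5 := hkey i ⟨0, hn'pos⟩
      simp only [Fin.val_mk, pow_zero, pow_one] at h5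
      rw [h5, hΨmk, hψdef, aeval_X, hwdef]
      simp
    apply AlgHom.ext
    intro x
    obtain ⟨f, rfl⟩ := Ideal.Quotient.mk_surjective x
    have := DFunLike.congr_fun hc f
    simpa using this
  have h2 : Φ.comp Ψ = AlgHom.id k _ := by
    have hc : (Φ.comp Ψ).comp (Ideal.Quotient.mkₐ k J) =
        (AlgHom.id k _).comp (Ideal.Quotient.mkₐ k J) := by
      apply MvPolynomial.algHom_ext
      rintro ⟨i, j⟩
      simp only [AlgHom.comp_apply, Ideal.Quotient.mkₐ_eq_mk, AlgHom.id_apply]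
      rw [hΨmk, hψdef, aeval_X, hwdef]
      exact hkey i j
    apply AlgHom.ext
    intro x
    obtain ⟨f, rfl⟩ := Ideal.Quotient.mk_surjective x
    have := DFunLike.congr_fun hc f
    simpa using this
  refine ⟨AlgEquiv.ofAlgHom Φ Ψ h2 h1, ?_, ?_⟩
  · intro f
    show Φ (Ideal.Quotient.mk I f) = _
    rw [hΦmk, hφdef]
    have hca : (Ideal.Quotient.mkₐ k J).comp
        (aeval fun i : Fin m => X (i, (⟨0, hn'pos⟩ : Fin n'))) = aeval v := by
      rw [MvPolynomial.comp_aeval]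
      rfl
    rw [← hca]
    rfl
  · intro i j
    show Φ (Ideal.Quotient.mk I (X i ^ q ^ (j : ℕ))) = _
    exact hkey i j

end
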